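/- Let (K_α, f_{αα'}) be an inverse system, over a nonempty directed partially ordered set (ι, ≤), of nonempty compact metric spaces whose bonding maps f_{αα'} are continuous surjections, and let Z be its inverse limit with projections f_α : Z → K_α. Let α ∈ ι and let C be a closed subset of K_α. Then the preimage f_α⁻¹(C) ⊆ Z is disconnected if and only if there exists α̂ ≥ α such that f_{αα̂}⁻¹(C) ⊆ K_{α̂} is disconnected. -/
import Mathlib


open Set Topology

/-- The inverse limit of an inverse system of spaces over a preordered index type:
the subspace of the product consisting of all threads. -/
def InvLimit {ι : Type*} [Preorder ι] (K : ι → Type*) (f : ∀ i j : ι, i ≤ j → K j → K i) :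
    Type _ :=
  {x : ∀ i, K i // ∀ (i j : ι) (h : i ≤ j), f i j h (x j) = x i}

instance {ι : Type*} [Preorder ι] (K : ι → Type*) [∀ i, TopologicalSpace (K i)]
    (f : ∀ i j : ι, i ≤ j → K j → K i) : TopologicalSpace (InvLimit K f) :=
  inferInstanceAs
    (TopologicalSpace {x : ∀ i, K i // ∀ (i j : ι) (h : i ≤ j), f i j h (x j) = x i})

section Aux

variable {ι : Type*} [PartialOrder ι] [IsDirected ι (· ≤ ·)] [Nonempty ι]
    (K : ι → Type*) [∀ i, MetricSpace (K i)] [∀ i, CompactSpace (K i)] [∀ i, Nonempty (K i)]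
    (f : ∀ i j : ι, i ≤ j → K j → K i)

lemma invLimit_cont_proj (β : ι) : Continuous fun z : InvLimit K f => z.1 β :=
  (continuous_apply β).comp continuous_subtype_val

/-- Surjectivity of the projections of the inverse limit. -/
lemma invLimit_surj_proj
    (hid : ∀ (i : ι) (x : K i), f i i le_rfl x = x)
    (hcomp : ∀ (i j k : ι) (hij : i ≤ j) (hjk : j ≤ k) (x : K k),
      f i j hij (f j k hjk x) = f i k (le_trans hij hjk) x)
    (hcont : ∀ (i j : ι) (h : i ≤ j), Continuous (f i j h))
    (hsurj : ∀ (i j : ι) (h : i ≤ j), Function.Surjective (f i j h))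
    (β : ι) (y : K β) : ∃ z : InvLimit K f, z.1 β = y := by
  classical
  set t : {δ : ι // β ≤ δ} → Set (∀ i, K i) := fun δ =>
    {x | f β δ.1 δ.2 (x δ.1) = y ∧ ∀ (γ : ι) (h : γ ≤ δ.1), x γ = f γ δ.1 h (x δ.1)} with ht
  have hmono : ∀ d d' : {δ : ι // β ≤ δ}, d.1 ≤ d'.1 → t d' ⊆ t d := by
    rintro d d' hdd' x ⟨hx1, hx2⟩
    have hxd : x d.1 = f d.1 d'.1 hdd' (x d'.1) := hx2 d.1 hdd'
    constructor
    · rw [hxd, hcomp]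
      exact hx1
    · intro γ h
      rw [hx2 γ (h.trans hdd'), hxd, hcomp]
  have hdir : Directed (· ⊇ ·) t := by
    intro d₁ d₂
    obtain ⟨c, hc1, hc2⟩ := exists_ge_ge d₁.1 d₂.1
    exact ⟨⟨c, d₁.2.trans hc1⟩, hmono _ _ hc1, hmono _ _ hc2⟩
  have hne : ∀ d, (t d).Nonempty := by
    rintro ⟨δ, hδ⟩
    obtain ⟨w, hw⟩ := hsurj β δ hδ y
    refine ⟨fun γ => if h : γ ≤ δ then f γ δ h w else Classical.arbitrary (K γ), ?_, ?_⟩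
    · simp only [dif_pos le_rfl, hid]
      exact hw
    · intro γ h
      simp only [dif_pos h, dif_pos le_rfl, hid]
  have hcl : ∀ d, IsClosed (t d) := by
    rintro ⟨δ, hδ⟩
    have : t ⟨δ, hδ⟩ = {x : ∀ i, K i | f β δ hδ (x δ) = y} ∩
        ⋂ (γ : ι), ⋂ (h : γ ≤ δ), {x : ∀ i, K i | x γ = f γ δ h (x δ)} := by
      ext x
      simp [ht, mem_iInter]
    rw [this]
    refine IsClosed.inter (isClosed_eq ((hcont _ _ _).comp (continuous_apply δ))
      continuous_const) (isClosed_iInter fun γ => isClosed_iInter fun h =>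
      isClosed_eq (continuous_apply γ) ((hcont _ _ _).comp (continuous_apply δ)))
  have hcpt : ∀ d, IsCompact (t d) := fun d => (hcl d).isCompact
  obtain ⟨x, hx⟩ := IsCompact.nonempty_iInter_of_directed_nonempty_isCompact_isClosed
    t hdir hne hcpt hcl
  simp only [mem_iInter] at hx
  have hthread : ∀ (i j : ι) (h : i ≤ j), f i j h (x j) = x i := by
    intro i j h
    obtain ⟨c, hc1, hc2⟩ := exists_ge_ge j β
    have hx2 := (hx ⟨c, hc2⟩).2
    rw [hx2 j hc1, hx2 i (h.trans hc1), hcomp]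
  have hxβ : x β = y := by
    have := (hx ⟨β, le_rfl⟩).1
    rwa [hid] at this
  exact ⟨⟨x, hthread⟩, hxβ⟩

/-- Every open subset of the inverse limit contains, around each of its points, a cylinder
determined by a single coordinate above `α`. -/
lemma invLimit_exists_basic
    (hcont : ∀ (i j : ι) (h : i ≤ j), Continuous (f i j h))
    (α : ι) (U : Set (InvLimit K f)) (hU : IsOpen U)
    (z : InvLimit K f) (hz : z ∈ U) :
    ∃ (β : ι) (hβ : α ≤ β) (O : Set (K β)), IsOpen O ∧ z.1 β ∈ O ∧
      ∀ w : InvLimit K f, w.1 β ∈ O → w ∈ U := by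
  classical
  obtain ⟨V, hV, hVU⟩ := isOpen_induced_iff.mp hU
  have hzV : z.1 ∈ V := by rw [← hVU] at hz; exact hz
  obtain ⟨I, u, hu, hsub⟩ := isOpen_pi_iff.mp hV z.1 hzV
  obtain ⟨β, hβ⟩ := Finset.exists_le (insert α I)
  have hαβ : α ≤ β := hβ α (Finset.mem_insert_self α I)
  have hIβ : ∀ γ ∈ I, γ ≤ β := fun γ hγ => hβ γ (Finset.mem_insert_of_mem hγ)
  refine ⟨β, hαβ, ⋂ γ : {γ // γ ∈ I}, f γ.1 β (hIβ γ.1 γ.2) ⁻¹' u γ.1, ?_, ?_, ?_⟩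
  · exact isOpen_iInter_of_finite fun γ =>
      IsOpen.preimage (hcont γ.1 β _) (hu γ.1 γ.2).1
  · rw [mem_iInter]
    rintro ⟨γ, hγ⟩
    show f γ β _ (z.1 β) ∈ u γ
    rw [z.2 γ β (hIβ γ hγ)]
    exact (hu γ hγ).2
  · intro w hw
    rw [mem_iInter] at hw
    have hwV : w.1 ∈ V := by
      apply hsub
      intro γ hγ
      have := hw ⟨γ, hγ⟩
      rw [mem_preimage, w.2 γ β (hIβ γ hγ)] at this
      exact this
    rw [← hVU]
    exact hwV

/-- A compact subset of an open subset of the inverse limit fits inside a single cylinder. -/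
lemma invLimit_compact_cover
    (hcont : ∀ (i j : ι) (h : i ≤ j), Continuous (f i j h))
    (α : ι) (T : Set (InvLimit K f)) (hT : IsCompact T)
    (W : Set (InvLimit K f)) (hW : IsOpen W) (hTW : T ⊆ W) :
    ∃ (β : ι) (hβ : α ≤ β) (O : Set (K β)), IsOpen O ∧ (∀ z ∈ T, z.1 β ∈ O) ∧
      ∀ z : InvLimit K f, z.1 β ∈ O → z ∈ W := by
  classical
  have h : ∀ z : InvLimit K f, ∃ (β : ι) (hβ : α ≤ β) (O : Set (K β)), IsOpen O ∧
      (z ∈ T → z.1 β ∈ O) ∧ ∀ w : InvLimit K f, w.1 β ∈ O → w ∈ W := by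
    intro z
    by_cases hz : z ∈ T
    · obtain ⟨β, hβ, O, hO, hzO, himp⟩ :=
        invLimit_exists_basic K f hcont α W hW z (hTW hz)
      exact ⟨β, hβ, O, hO, fun _ => hzO, himp⟩
    · exact ⟨α, le_rfl, ∅, isOpen_empty, fun h => absurd h hz, fun w hw => absurd hw (notMem_empty _)⟩
  choose β hβ O hO hmem himp using h
  have hcov : T ⊆ ⋃ z : InvLimit K f, (fun w : InvLimit K f => w.1 (β z)) ⁻¹' O z := by
    intro z hz
    exact mem_iUnion.mpr ⟨z, hmem z hz⟩
  obtain ⟨t, ht⟩ := hT.elim_finite_subcover _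
    (fun z => (hO z).preimage (invLimit_cont_proj K f (β z))) hcov
  obtain ⟨b, hb⟩ := Finset.exists_le (insert α (t.image β))
  have hαb : α ≤ b := hb α (Finset.mem_insert_self _ _)
  have htb : ∀ z ∈ t, β z ≤ b := fun z hz =>
    hb (β z) (Finset.mem_insert_of_mem (Finset.mem_image_of_mem β hz))
  refine ⟨b, hαb, ⋃ z : {z // z ∈ t}, f (β z.1) b (htb z.1 z.2) ⁻¹' O z.1, ?_, ?_, ?_⟩
  · exact isOpen_iUnion fun z => (hO z.1).preimage (hcont _ _ _)
  · intro z hz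
    obtain ⟨w, hwt, hzw⟩ := mem_iUnion₂.mp (ht hz)
    refine mem_iUnion.mpr ⟨⟨w, hwt⟩, ?_⟩
    show f (β w) b _ (z.1 b) ∈ O w
    rw [z.2 (β w) b (htb w hwt)]
    exact hzw
  · intro z hz
    obtain ⟨w, hzw⟩ := mem_iUnion.mp hz
    rw [mem_preimage, z.2 (β w.1) b (htb w.1 w.2)] at hzw
    exact himp w.1 z hzw

/-- The inverse limit is compact. -/
lemma invLimit_compactSpace
    (hcont : ∀ (i j : ι) (h : i ≤ j), Continuous (f i j h)) :
    CompactSpace (InvLimit K f) := by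
  have hcl : IsClosed {x : ∀ i, K i | ∀ (i j : ι) (h : i ≤ j), f i j h (x j) = x i} := by
    have : {x : ∀ i, K i | ∀ (i j : ι) (h : i ≤ j), f i j h (x j) = x i} =
        ⋂ (i : ι), ⋂ (j : ι), ⋂ (h : i ≤ j), {x : ∀ i, K i | f i j h (x j) = x i} := by
      ext x; simp [mem_iInter]
    rw [this]
    exact isClosed_iInter fun i => isClosed_iInter fun j => isClosed_iInter fun h =>
      isClosed_eq ((hcont i j h).comp (continuous_apply j)) (continuous_apply i)
  exact isCompact_iff_compactSpace.mp hcl.isCompact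

end Aux

/-- Let `(K_α, f_{αα'})` be an inverse system, over a nonempty directed
poset, of nonempty compact metric spaces with continuous surjective bonding maps, with
inverse limit `Z`, and let `C ⊆ K_α` be closed.  Then the preimage of `C` in `Z` is
disconnected iff `f_{αα̂} ⁻¹' C` is disconnected for some `α̂ ≥ α`. -/
theorem invLimit_preimage_disconnected_iff
    {ι : Type*} [PartialOrder ι] [IsDirected ι (· ≤ ·)] [Nonempty ι]
    (K : ι → Type*) [∀ i, MetricSpace (K i)] [∀ i, CompactSpace (K i)] [∀ i, Nonempty (K i)]
    (f : ∀ i j : ι, i ≤ j → K j → K i)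
    (hid : ∀ (i : ι) (x : K i), f i i le_rfl x = x)
    (hcomp : ∀ (i j k : ι) (hij : i ≤ j) (hjk : j ≤ k) (x : K k),
      f i j hij (f j k hjk x) = f i k (le_trans hij hjk) x)
    (hcont : ∀ (i j : ι) (h : i ≤ j), Continuous (f i j h))
    (hsurj : ∀ (i j : ι) (h : i ≤ j), Function.Surjective (f i j h))
    (α : ι) (C : Set (K α)) (hC : IsClosed C) :
    ¬ IsPreconnected {z : InvLimit K f | z.1 α ∈ C} ↔
      ∃ (β : ι) (h : α ≤ β), ¬ IsPreconnected (f α β h ⁻¹' C) := by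
  classical
  set S : Set (InvLimit K f) := {z : InvLimit K f | z.1 α ∈ C} with hSdef
  constructor
  · intro hdis
    rw [IsPreconnected] at hdis
    push_neg at hdis
    obtain ⟨U, V, hU, hV, hUV, hSU, hSV, hdisj⟩ := hdis
    haveI : CompactSpace (InvLimit K f) := invLimit_compactSpace K f hcont
    have hScl : IsClosed S := hC.preimage (invLimit_cont_proj K f α)
    have hT1 : IsCompact (S \ V) := (hScl.sdiff hV).isCompact
    have hT2 : IsCompact (S \ U) := (hScl.sdiff hU).isCompact
    have hT1U : S \ V ⊆ U := fun z hz => (hUV hz.1).resolve_right hz.2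
    have hT2V : S \ U ⊆ V := fun z hz => (hUV hz.1).resolve_left hz.2
    obtain ⟨β₁, hβ₁, O₁, hO₁, hmem₁, himp₁⟩ :=
      invLimit_compact_cover K f hcont α (S \ V) hT1 U hU hT1U
    obtain ⟨β₂, hβ₂, O₂, hO₂, hmem₂, himp₂⟩ :=
      invLimit_compact_cover K f hcont α (S \ U) hT2 V hV hT2V
    obtain ⟨b, hb1, hb2⟩ := exists_ge_ge β₁ β₂
    have hab : α ≤ b := hβ₁.trans hb1
    refine ⟨b, hab, ?_⟩
    intro hpre
    have hmemS : ∀ z : InvLimit K f, z.1 b ∈ f α b hab ⁻¹' C → z ∈ S := by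
      intro z hz
      show z.1 α ∈ C
      rw [← z.2 α b hab]
      exact hz
    have hmemS' : ∀ z : InvLimit K f, z ∈ S → z.1 b ∈ f α b hab ⁻¹' C := by
      intro z hz
      rw [mem_preimage, z.2 α b hab]
      exact hz
    have hpull₁ : ∀ z : InvLimit K f, z.1 b ∈ f β₁ b hb1 ⁻¹' O₁ ↔ z.1 β₁ ∈ O₁ := by
      intro z
      rw [mem_preimage, z.2 β₁ b hb1]
    have hpull₂ : ∀ z : InvLimit K f, z.1 b ∈ f β₂ b hb2 ⁻¹' O₂ ↔ z.1 β₂ ∈ O₂ := by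
      intro z
      rw [mem_preimage, z.2 β₂ b hb2]
    have hcover : f α b hab ⁻¹' C ⊆ (f β₁ b hb1 ⁻¹' O₁) ∪ (f β₂ b hb2 ⁻¹' O₂) := by
      intro y hy
      obtain ⟨z, hz⟩ := invLimit_surj_proj K f hid hcomp hcont hsurj b y
      rw [← hz] at hy ⊢
      have hzS : z ∈ S := hmemS z hy
      by_cases hzV : z ∈ V
      · have hzU : z ∉ U := by
          intro hzU
          have : z ∈ S ∩ (U ∩ V) := ⟨hzS, hzU, hzV⟩
          rw [hdisj] at this
          exact this
        exact Or.inr ((hpull₂ z).mpr (hmem₂ z ⟨hzS, hzU⟩))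
      · exact Or.inl ((hpull₁ z).mpr (hmem₁ z ⟨hzS, hzV⟩))
    have hne1 : (f α b hab ⁻¹' C ∩ f β₁ b hb1 ⁻¹' O₁).Nonempty := by
      obtain ⟨z, hzS, hzU⟩ := hSU
      have hzV : z ∉ V := by
        intro hzV
        have : z ∈ S ∩ (U ∩ V) := ⟨hzS, hzU, hzV⟩
        rw [hdisj] at this
        exact this
      exact ⟨z.1 b, hmemS' z hzS, (hpull₁ z).mpr (hmem₁ z ⟨hzS, hzV⟩)⟩
    have hne2 : (f α b hab ⁻¹' C ∩ f β₂ b hb2 ⁻¹' O₂).Nonempty := by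
      obtain ⟨z, hzS, hzV⟩ := hSV
      have hzU : z ∉ U := by
        intro hzU
        have : z ∈ S ∩ (U ∩ V) := ⟨hzS, hzU, hzV⟩
        rw [hdisj] at this
        exact this
      exact ⟨z.1 b, hmemS' z hzS, (hpull₂ z).mpr (hmem₂ z ⟨hzS, hzU⟩)⟩
    obtain ⟨y, hyC, hy1, hy2⟩ := hpre _ _ (hO₁.preimage (hcont β₁ b hb1))
      (hO₂.preimage (hcont β₂ b hb2)) hcover hne1 hne2
    obtain ⟨z, hz⟩ := invLimit_surj_proj K f hid hcomp hcont hsurj b y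
    rw [← hz] at hyC hy1 hy2
    have hzS : z ∈ S := hmemS z hyC
    have hzU : z ∈ U := himp₁ z ((hpull₁ z).mp hy1)
    have hzV : z ∈ V := himp₂ z ((hpull₂ z).mp hy2)
    have : z ∈ S ∩ (U ∩ V) := ⟨hzS, hzU, hzV⟩
    rw [hdisj] at this
    exact this
  · rintro ⟨β, hβ, hdis⟩
    rw [IsPreconnected] at hdis
    push_neg at hdis
    obtain ⟨O₁, O₂, hO₁, hO₂, hcov, hne1, hne2, hdisj⟩ := hdis
    rw [IsPreconnected]
    push_neg
    have hmemS : ∀ z : InvLimit K f, z ∈ S ↔ z.1 β ∈ f α β hβ ⁻¹' C := by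
      intro z
      rw [mem_preimage, z.2 α β hβ]
      exact Iff.rfl
    refine ⟨(fun z : InvLimit K f => z.1 β) ⁻¹' O₁, (fun z : InvLimit K f => z.1 β) ⁻¹' O₂,
      hO₁.preimage (invLimit_cont_proj K f β), hO₂.preimage (invLimit_cont_proj K f β),
      ?_, ?_, ?_, ?_⟩
    · intro z hz
      exact hcov ((hmemS z).mp hz)
    · obtain ⟨y, hy1, hy2⟩ := hne1
      obtain ⟨z, hz⟩ := invLimit_surj_proj K f hid hcomp hcont hsurj β y
      rw [← hz] at hy1 hy2
      exact ⟨z, (hmemS z).mpr hy1, hy2⟩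
    · obtain ⟨y, hy1, hy2⟩ := hne2
      obtain ⟨z, hz⟩ := invLimit_surj_proj K f hid hcomp hcont hsurj β y
      rw [← hz] at hy1 hy2
      exact ⟨z, (hmemS z).mpr hy1, hy2⟩
    · rw [eq_empty_iff_forall_notMem]
      rintro z ⟨hzS, hz1, hz2⟩
      have : z.1 β ∈ (f α β hβ ⁻¹' C) ∩ (O₁ ∩ O₂) := ⟨(hmemS z).mp hzS, hz1, hz2⟩
      rw [hdisj] at this
      exact this
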